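/- Bayes-type disintegration: with γ = μ⊗ν, U : W×M → W measurable, dP/dγ = L, L̂(w) = ∫_M L(w,m)dν(m), for any bounded measurable g on W×M the conditional expectation of g given σ(U) under γ satisfies E_γ[g | U = x] = (1/L̂(x)) ∫_M L(x,m) E_μ[g(·,m) | U(·,m) = x] dν(m), for μ-almost every x. -/

import Mathlib

open MeasureTheory
open scoped NNReal ENNReal

private lemma aux_zero_or_bdd {α : Type*} [MeasurableSpace α] (μ : Measure α)
    (ℓ : α → ℝ) (hℓ : Measurable ℓ) (hℓnn : ∀ x, 0 ≤ ℓ x) (T : α → α) (hT : Measurable T)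
    (hmap : Measure.map T μ = μ.withDensity (fun x => ENNReal.ofReal (ℓ x)))
    (φ : α → ℝ) (hφ : Measurable φ) (C : ℝ)
    (hb : ∀ᵐ w ∂μ, |φ (T w)| ≤ C) :
    ∀ᵐ x ∂μ, ℓ x = 0 ∨ |φ x| ≤ C := by
  set A : Set α := {x | C < |φ x|} with hA_def
  have hA : MeasurableSet A := measurableSet_lt measurable_const hφ.abs
  have h1 : μ (T ⁻¹' A) = 0 := by
    have h := ae_iff.1 hb
    have hset : T ⁻¹' A = {w | ¬ |φ (T w)| ≤ C} := by ext w; simp [hA_def, not_le]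
    rw [hset]; exact h
  have h2 : μ.withDensity (fun x => ENNReal.ofReal (ℓ x)) A = 0 := by
    rw [← hmap, Measure.map_apply hT hA]; exact h1
  rw [withDensity_apply _ hA] at h2
  have h3 : (fun x => ENNReal.ofReal (ℓ x)) =ᵐ[μ.restrict A] 0 :=
    (lintegral_eq_zero_iff hℓ.ennreal_ofReal).1 h2
  have h4 : ∀ᵐ x ∂μ, x ∈ A → ENNReal.ofReal (ℓ x) = 0 := (ae_restrict_iff' hA).1 h3
  filter_upwards [h4] with x hx
  by_cases hxa : x ∈ A
  · left
    have := hx hxa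
    rw [ENNReal.ofReal_eq_zero] at this
    exact le_antisymm this (hℓnn x)
  · right
    simpa [hA_def, not_lt] using hxa

private lemma aux_change {α : Type*} [MeasurableSpace α] (μ : Measure α)
    (ℓ : α → ℝ) (hℓ : Measurable ℓ) (hℓnn : ∀ x, 0 ≤ ℓ x)
    (T : α → α) (hT : Measurable T)
    (hmap : Measure.map T μ = μ.withDensity (fun x => ENNReal.ofReal (ℓ x)))
    (φ : α → ℝ) (hφ : Measurable φ) (s : Set α) (hs : MeasurableSet s) :
    ∫ w in T ⁻¹' s, φ (T w) ∂μ = ∫ x in s, ℓ x * φ x ∂μ := by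
  rw [← setIntegral_map hs hφ.aestronglyMeasurable hT.aemeasurable, hmap]
  have heq : (fun x => ENNReal.ofReal (ℓ x)) = fun x => (((ℓ x).toNNReal : ℝ≥0) : ℝ≥0∞) := rfl
  rw [heq, restrict_withDensity hs,
    integral_withDensity_eq_integral_smul (f := fun x => (ℓ x).toNNReal)
      (measurable_real_toNNReal.comp hℓ) φ]
  refine setIntegral_congr_fun hs fun x _ => ?_
  simp [NNReal.smul_def, Real.coe_toNNReal _ (hℓnn x)]

/-- Bayes-type disintegration on a product space: if `γ = μ ⊗ ν`, `dP/dγ = L`,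
`L̂(x) = ∫ L(x,m) dν(m) > 0`, `h(x,m)` is the disintegration of `g(·,m)` w.r.t. the
partial map `U(·,m)` under `μ`, and `H` is the disintegration of `g` w.r.t. `U` under
`γ`, then  `H x = (1/L̂ x) ∫ L(x,m) h(x,m) dν(m)` for `μ`-a.e. `x`. -/
theorem bayes_disintegration
    {W M : Type*} [MeasurableSpace W] [MeasurableSpace M]
    (μ : Measure W) (ν : Measure M) [IsProbabilityMeasure μ] [IsProbabilityMeasure ν]
    (U : W × M → W) (hU : Measurable U)
    (L : W × M → ℝ) (hLm : Measurable L) (hLnn : ∀ p, 0 ≤ L p)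
    (hpart : ∀ᵐ m ∂ν, Measure.map (fun w => U (w, m)) μ
      = μ.withDensity (fun w => ENNReal.ofReal (L (w, m))))
    (Lhat : W → ℝ) (hLhat : ∀ x, Lhat x = ∫ m, L (x, m) ∂ν)
    (hLhatpos : ∀ᵐ x ∂μ, 0 < Lhat x)
    (g : W × M → ℝ) (hg : Measurable g) (hgbd : ∃ C, ∀ p, |g p| ≤ C)
    -- h(x,m) : the regular conditional expectation E_μ[g(·,m) | U(·,m) = x]
    (h : W × M → ℝ) (hhm : Measurable h)
    (hdis : ∀ᵐ m ∂ν, (fun w => h (U (w, m), m))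
      =ᵐ[μ] μ[(fun w => g (w, m)) | MeasurableSpace.comap (fun w => U (w, m)) inferInstance])
    -- H : the disintegration E_γ[g | U = x]
    (H : W → ℝ) (hHm : Measurable H)
    (hHdis : (fun p => H (U p))
      =ᵐ[μ.prod ν] (μ.prod ν)[g | MeasurableSpace.comap U inferInstance]) :
    ∀ᵐ x ∂μ, H x = (1 / Lhat x) * ∫ m, L (x, m) * h (x, m) ∂ν := by
  classical
  obtain ⟨C₀, hC₀⟩ := hgbd
  set C : ℝ := max C₀ 0 with hCdef
  have hC : ∀ p, |g p| ≤ C := fun p => (hC₀ p).trans (le_max_left _ _)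
  have hCnn : 0 ≤ C := le_max_right _ _
  set γ := μ.prod ν with hγ
  have hUm : ∀ m, Measurable fun w => U (w, m) :=
    fun m => hU.comp (measurable_id.prodMk measurable_const)
  have hgm : ∀ m, Measurable fun w => g (w, m) :=
    fun m => hg.comp (measurable_id.prodMk measurable_const)
  -- integrability of g
  have hgInt : Integrable g γ :=
    (integrable_const C).mono' hg.aestronglyMeasurable
      (Filter.Eventually.of_forall fun p => by simpa [Real.norm_eq_abs] using hC p)
  have hgIntm : ∀ m, Integrable (fun w => g (w, m)) μ := fun m =>
    (integrable_const C).mono' (hgm m).aestronglyMeasurable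
      (Filter.Eventually.of_forall fun w => by simpa [Real.norm_eq_abs] using hC (w, m))
  -- integrability of L on the product
  have hmapProb : ∀ᵐ m ∂ν, ∫⁻ w, ENNReal.ofReal (L (w, m)) ∂μ = 1 := by
    filter_upwards [hpart] with m hm
    have h1 : μ.withDensity (fun w => ENNReal.ofReal (L (w, m))) Set.univ = 1 := by
      rw [← hm, Measure.map_apply (hUm m) MeasurableSet.univ]
      simp
    rwa [withDensity_apply _ MeasurableSet.univ, setLIntegral_univ] at h1
  have hLint : Integrable L γ := by
    refine ⟨hLm.aestronglyMeasurable, ?_⟩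
    rw [hasFiniteIntegral_iff_ofReal (Filter.Eventually.of_forall hLnn)]
    have h1 : ∫⁻ p, ENNReal.ofReal (L p) ∂γ = 1 := by
      rw [lintegral_prod_symm _ hLm.ennreal_ofReal.aemeasurable, lintegral_congr_ae hmapProb]
      simp
    simp [h1]
  -- H ∘ U integrable on γ
  have hHUint : Integrable (fun p => H (U p)) γ := integrable_condExp.congr hHdis.symm
  -- a.e. bound on H ∘ U
  have hHUbd : ∀ᵐ p ∂γ, |H (U p)| ≤ C := by
    have h1 : ∀ᵐ p ∂γ, |(γ[g|MeasurableSpace.comap U inferInstance]) p| ≤ ((⟨C, hCnn⟩ : ℝ≥0) : ℝ) :=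
      ae_bdd_condExp_of_ae_bdd (Filter.Eventually.of_forall fun p => by exact hC p)
    filter_upwards [h1, hHdis] with p h1p h2p
    rw [h2p]; simpa using h1p
  -- per-m version
  have hHUbd_m : ∀ᵐ m ∂ν, ∀ᵐ w ∂μ, |H (U (w, m))| ≤ C := by
    have hmeas : MeasurableSet {p : W × M | |H (U p)| ≤ C} :=
      measurableSet_le (hHm.comp hU).abs measurable_const
    exact ((Measure.ae_ae_comm hmeas).1 (Measure.ae_ae_of_ae_prod hHUbd))
  -- L = 0 or |H| ≤ C, a.e.
  have hHzb : ∀ᵐ m ∂ν, ∀ᵐ x ∂μ, L (x, m) = 0 ∨ |H x| ≤ C := by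
    filter_upwards [hpart, hHUbd_m] with m hm hb
    exact aux_zero_or_bdd μ (fun x => L (x, m)) (hLm.comp (measurable_id.prodMk measurable_const))
      (fun x => hLnn _) (fun w => U (w, m)) (hUm m) hm H hHm C hb
  -- global a.e. bound on H
  have hHbd : ∀ᵐ x ∂μ, |H x| ≤ C := by
    have hmeas : MeasurableSet {p : W × M | L (p.1, p.2) = 0 ∨ |H p.1| ≤ C} := by
      apply MeasurableSet.union
      · exact measurableSet_eq_fun hLm measurable_const
      · exact measurableSet_le (hHm.comp measurable_fst).abs measurable_const
    have hswap : ∀ᵐ x ∂μ, ∀ᵐ m ∂ν, L (x, m) = 0 ∨ |H x| ≤ C :=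
      (Measure.ae_ae_comm hmeas).2 hHzb
    filter_upwards [hswap, hLhatpos] with x hx hpos
    by_cases hxb : |H x| ≤ C
    · exact hxb
    · exfalso
      have hz : (fun m => L (x, m)) =ᵐ[ν] fun _ => (0 : ℝ) := by
        filter_upwards [hx] with m hm
        rcases hm with hm | hm
        · exact hm
        · exact absurd hm hxb
      have : Lhat x = 0 := by rw [hLhat, integral_congr_ae hz]; simp
      linarith
  -- a.e. bound |L * h| ≤ C * L on γ
  have hLhbd_m : ∀ᵐ m ∂ν, ∀ᵐ x ∂μ, L (x, m) = 0 ∨ |h (x, m)| ≤ C := by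
    filter_upwards [hpart, hdis] with m hm hd
    have hb : ∀ᵐ w ∂μ, |h (U (w, m), m)| ≤ C := by
      have h1 : ∀ᵐ w ∂μ,
          |(μ[(fun w => g (w, m))|MeasurableSpace.comap (fun w => U (w, m)) inferInstance]) w|
            ≤ ((⟨C, hCnn⟩ : ℝ≥0) : ℝ) :=
        ae_bdd_condExp_of_ae_bdd (Filter.Eventually.of_forall fun w => by exact hC (w, m))
      filter_upwards [h1, hd] with w h1w h2w
      rw [h2w]; simpa using h1w
    exact aux_zero_or_bdd μ (fun x => L (x, m)) (hLm.comp (measurable_id.prodMk measurable_const))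
      (fun x => hLnn _) (fun w => U (w, m)) (hUm m) hm (fun x => h (x, m))
      (hhm.comp (measurable_id.prodMk measurable_const)) C hb
  have hLhbd : ∀ᵐ p ∂γ, |L p * h p| ≤ C * L p := by
    have hmeas : MeasurableSet {p : W × M | L (p.1, p.2) = 0 ∨ |h (p.1, p.2)| ≤ C} := by
      apply MeasurableSet.union
      · exact measurableSet_eq_fun hLm measurable_const
      · exact measurableSet_le hhm.abs measurable_const
    have h1 : ∀ᵐ x ∂μ, ∀ᵐ m ∂ν, L (x, m) = 0 ∨ |h (x, m)| ≤ C :=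
      (Measure.ae_ae_comm hmeas).2 hLhbd_m
    have h2 : ∀ᵐ p ∂γ, L (p.1, p.2) = 0 ∨ |h (p.1, p.2)| ≤ C :=
      (Measure.ae_prod_iff_ae_ae hmeas).2 h1
    filter_upwards [h2] with p hp
    rcases hp with hp | hp
    · have hp' : L p = 0 := hp
      rw [hp']; simp [hCnn]
    · have hp' : |h p| ≤ C := hp
      rw [abs_mul, abs_of_nonneg (hLnn p)]
      calc L p * |h p| ≤ L p * C := mul_le_mul_of_nonneg_left hp' (hLnn p)
        _ = C * L p := by ring
  have hLHbd : ∀ᵐ p ∂γ, |L p * H p.1| ≤ C * L p := by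
    have hmeas : MeasurableSet {p : W × M | |H p.1| ≤ C} :=
      measurableSet_le (hHm.comp measurable_fst).abs measurable_const
    have h2 : ∀ᵐ p ∂γ, |H p.1| ≤ C := by
      refine (Measure.ae_prod_iff_ae_ae hmeas).2 ?_
      filter_upwards [hHbd] with x hx
      exact Filter.Eventually.of_forall (fun m => hx)
    filter_upwards [h2] with p hp
    rw [abs_mul, abs_of_nonneg (hLnn p)]
    calc L p * |H p.1| ≤ L p * C := mul_le_mul_of_nonneg_left hp (hLnn p)
      _ = C * L p := by ring
  -- integrability of L * h and L * H∘fst on γ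
  have hLhint : Integrable (fun p => L p * h p) γ :=
    (hLint.const_mul C).mono' (hLm.mul hhm).aestronglyMeasurable
      (by filter_upwards [hLhbd] with p hp; simpa [Real.norm_eq_abs, abs_mul] using hp)
  have hLHint : Integrable (fun p => L p * H p.1) γ :=
    (hLint.const_mul C).mono' (hLm.mul (hHm.comp measurable_fst)).aestronglyMeasurable
      (by filter_upwards [hLHbd] with p hp; simpa [Real.norm_eq_abs, abs_mul] using hp)
  -- integrability of the two candidate functions on μ
  have hFint : Integrable (fun x => ∫ m, L (x, m) * h (x, m) ∂ν) μ := hLhint.integral_prod_left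
  have hHLint : Integrable (fun x => H x * Lhat x) μ := by
    have h1 := hLHint.integral_prod_left
    refine h1.congr (Filter.Eventually.of_forall fun x => ?_)
    simp only [integral_mul_const]
    rw [← hLhat]; ring
  -- comap σ-algebras
  have hmU : MeasurableSpace.comap U inferInstance ≤ (inferInstance : MeasurableSpace (W × M)) :=
    hU.comap_le
  haveI : IsProbabilityMeasure γ := by rw [hγ]; infer_instance
  -- the key per-set identity
  have hkey : ∀ s : Set W, MeasurableSet s →
      ∫ x in s, H x * Lhat x ∂μ = ∫ x in s, (∫ m, L (x, m) * h (x, m) ∂ν) ∂μ := by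
    intro s hs
    set ind : W → ℝ := s.indicator (fun _ => (1 : ℝ)) with hind
    have hindm : Measurable ind := measurable_const.indicator hs
    set Φ : W × M → ℝ := fun p => ind p.1 * (L p * H p.1) with hΦ
    set Ψ : W × M → ℝ := fun p => ind p.1 * (L p * h p) with hΨ
    have hΦm : Measurable Φ := (hindm.comp measurable_fst).mul (hLm.mul (hHm.comp measurable_fst))
    have hΨm : Measurable Ψ := (hindm.comp measurable_fst).mul (hLm.mul hhm)
    have hind_le : ∀ x, |ind x| ≤ 1 := by
      intro x; by_cases hx : x ∈ s <;> simp [hind, Set.indicator, hx]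
    have hΦint : Integrable Φ γ := by
      refine hLHint.abs.mono' hΦm.aestronglyMeasurable
        (Filter.Eventually.of_forall fun p => ?_)
      have h1 : ‖Φ p‖ = |ind p.1| * |L p * H p.1| := by
        rw [Real.norm_eq_abs]; exact abs_mul _ _
      rw [h1]
      calc |ind p.1| * |L p * H p.1| ≤ 1 * |L p * H p.1| :=
            mul_le_mul_of_nonneg_right (hind_le _) (abs_nonneg _)
        _ = |(fun p => L p * H p.1) p| := one_mul _
    have hΨint : Integrable Ψ γ := by
      refine hLhint.abs.mono' hΨm.aestronglyMeasurable
        (Filter.Eventually.of_forall fun p => ?_)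
      have h1 : ‖Ψ p‖ = |ind p.1| * |L p * h p| := by
        rw [Real.norm_eq_abs]; exact abs_mul _ _
      rw [h1]
      calc |ind p.1| * |L p * h p| ≤ 1 * |L p * h p| :=
            mul_le_mul_of_nonneg_right (hind_le _) (abs_nonneg _)
        _ = |(fun p => L p * h p) p| := one_mul _
    have hUs : MeasurableSet (U ⁻¹' s) := hU hs
    have lhs1 : ∫ x in s, H x * Lhat x ∂μ = ∫ p, Φ p ∂γ := by
      rw [hγ, integral_prod _ (hγ ▸ hΦint), ← integral_indicator hs]
      refine integral_congr_ae (Filter.Eventually.of_forall fun x => ?_)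
      beta_reduce
      have h2 : ∫ m, Φ (x, m) ∂ν = ind x * ((∫ m, L (x, m) ∂ν) * H x) := by
        simp only [hΦ]
        rw [integral_const_mul, integral_mul_const]
      rw [h2, ← hLhat]
      by_cases hx : x ∈ s <;> simp [hind, Set.indicator, hx, mul_comm]
    have lhs2 : ∫ p, Φ p ∂γ = ∫ m, ∫ x in s, L (x, m) * H x ∂μ ∂ν := by
      rw [hγ, integral_prod_symm _ (hγ ▸ hΦint)]
      refine integral_congr_ae (Filter.Eventually.of_forall fun m => ?_)
      beta_reduce
      rw [← integral_indicator hs]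
      refine integral_congr_ae (Filter.Eventually.of_forall fun x => ?_)
      beta_reduce
      by_cases hx : x ∈ s <;> simp [hΦ, hind, Set.indicator, hx]
    have lhs3 : ∫ m, ∫ x in s, L (x, m) * H x ∂μ ∂ν
        = ∫ m, ∫ w in (fun w => U (w, m)) ⁻¹' s, H (U (w, m)) ∂μ ∂ν := by
      refine integral_congr_ae ?_
      filter_upwards [hpart] with m hm
      exact (aux_change μ (fun x => L (x, m)) (hLm.comp (measurable_id.prodMk measurable_const))
        (fun x => hLnn _) (fun w => U (w, m)) (hUm m) hm H hHm s hs).symm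
    have lhs4 : ∫ m, ∫ w in (fun w => U (w, m)) ⁻¹' s, H (U (w, m)) ∂μ ∂ν
        = ∫ p in U ⁻¹' s, H (U p) ∂γ := by
      rw [← integral_indicator hUs, hγ,
        integral_prod_symm _ (hγ ▸ (hHUint.indicator hUs))]
      refine integral_congr_ae (Filter.Eventually.of_forall fun m => ?_)
      beta_reduce
      rw [← integral_indicator ((hUm m) hs)]
      refine integral_congr_ae (Filter.Eventually.of_forall fun w => ?_)
      beta_reduce
      by_cases hw : U (w, m) ∈ s <;> simp [Set.indicator, hw]
    have mid : ∫ p in U ⁻¹' s, H (U p) ∂γ = ∫ p in U ⁻¹' s, g p ∂γ := by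
      have h1 : ∫ p in U ⁻¹' s, H (U p) ∂γ
          = ∫ p in U ⁻¹' s, (γ[g|MeasurableSpace.comap U inferInstance]) p ∂γ :=
        integral_congr_ae (ae_restrict_of_ae hHdis)
      rw [h1]
      exact setIntegral_condExp hmU hgInt ⟨s, hs, rfl⟩
    have rhs4 : ∫ p in U ⁻¹' s, g p ∂γ
        = ∫ m, ∫ w in (fun w => U (w, m)) ⁻¹' s, g (w, m) ∂μ ∂ν := by
      rw [← integral_indicator hUs, hγ, integral_prod_symm _ (hγ ▸ (hgInt.indicator hUs))]
      refine integral_congr_ae (Filter.Eventually.of_forall fun m => ?_)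
      beta_reduce
      rw [← integral_indicator ((hUm m) hs)]
      refine integral_congr_ae (Filter.Eventually.of_forall fun w => ?_)
      beta_reduce
      by_cases hw : U (w, m) ∈ s <;> simp [Set.indicator, hw]
    have rhs3 : ∫ m, ∫ w in (fun w => U (w, m)) ⁻¹' s, g (w, m) ∂μ ∂ν
        = ∫ m, ∫ x in s, L (x, m) * h (x, m) ∂μ ∂ν := by
      refine integral_congr_ae ?_
      filter_upwards [hpart, hdis] with m hm hd
      have e1 : ∫ w in (fun w => U (w, m)) ⁻¹' s, g (w, m) ∂μ
          = ∫ w in (fun w => U (w, m)) ⁻¹' s,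
              (μ[(fun w => g (w, m))|MeasurableSpace.comap (fun w => U (w, m)) inferInstance]) w ∂μ :=
        (setIntegral_condExp (hUm m).comap_le (hgIntm m) ⟨s, hs, rfl⟩).symm
      have e2 : ∫ w in (fun w => U (w, m)) ⁻¹' s,
              (μ[(fun w => g (w, m))|MeasurableSpace.comap (fun w => U (w, m)) inferInstance]) w ∂μ
          = ∫ w in (fun w => U (w, m)) ⁻¹' s, h (U (w, m), m) ∂μ :=
        (integral_congr_ae (ae_restrict_of_ae hd)).symm
      have e3 : ∫ w in (fun w => U (w, m)) ⁻¹' s, h (U (w, m), m) ∂μ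
          = ∫ x in s, L (x, m) * h (x, m) ∂μ :=
        aux_change μ (fun x => L (x, m)) (hLm.comp (measurable_id.prodMk measurable_const))
          (fun x => hLnn _) (fun w => U (w, m)) (hUm m) hm (fun x => h (x, m))
          (hhm.comp (measurable_id.prodMk measurable_const)) s hs
      rw [e1, e2, e3]
    have rhs2 : ∫ m, ∫ x in s, L (x, m) * h (x, m) ∂μ ∂ν = ∫ p, Ψ p ∂γ := by
      rw [hγ, integral_prod_symm _ (hγ ▸ hΨint)]
      refine integral_congr_ae (Filter.Eventually.of_forall fun m => ?_)
      beta_reduce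
      rw [← integral_indicator hs]
      refine integral_congr_ae (Filter.Eventually.of_forall fun x => ?_)
      beta_reduce
      by_cases hx : x ∈ s <;> simp [hΨ, hind, Set.indicator, hx]
    have rhs1 : ∫ p, Ψ p ∂γ = ∫ x in s, (∫ m, L (x, m) * h (x, m) ∂ν) ∂μ := by
      rw [hγ, integral_prod _ (hγ ▸ hΨint), ← integral_indicator hs]
      refine integral_congr_ae (Filter.Eventually.of_forall fun x => ?_)
      beta_reduce
      have h2 : ∫ m, Ψ (x, m) ∂ν = ind x * ∫ m, L (x, m) * h (x, m) ∂ν := by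
        simp only [hΨ]
        rw [integral_const_mul]
      rw [h2]
      by_cases hx : x ∈ s <;> simp [hind, Set.indicator, hx]
    rw [lhs1, lhs2, lhs3, lhs4, mid, rhs4, rhs3, rhs2, rhs1]
  have hae : (fun x => H x * Lhat x) =ᵐ[μ] fun x => ∫ m, L (x, m) * h (x, m) ∂ν :=
    Integrable.ae_eq_of_forall_setIntegral_eq _ _ hHLint hFint fun s hs _ => hkey s hs
  filter_upwards [hae, hLhatpos] with x h1 h2
  rw [← h1]
  field_simp
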